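/- Let τ_0, τ_1, τ_2, z ∈ ℂ with Im(τ_0) > 0, Im(τ_2) < 0, and τ_1 a real quadratic irrational (so Im(τ_1) = 0), and suppose Im(τ_2) < Im(z) < Im(τ_0). Then the series Σ_{j=1}^∞ cos(πj(2z − τ_0 − τ_1 − τ_2)) / (j · sin(πjτ_0) · sin(πjτ_1) · sin(πjτ_2)) is absolutely convergent, i.e. the function j ↦ cos(πj(2z − τ_0 − τ_1 − τ_2)) / (j · sin(πjτ_0) · sin(πjτ_1) · sin(πjτ_2)) on positive integers is summable. -/

import Mathlib

open scoped Real
open Polynomial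
set_option maxHeartbeats 1000000

lemma quadLiouville {α : ℝ} (hirr : Irrational α)
    (hdeg : ∃ p : Polynomial ℚ, p ≠ 0 ∧ p.degree = 2 ∧ Polynomial.aeval α p = 0) :
    ∃ A : ℝ, 0 < A ∧ ∀ n : ℕ, 1 ≤ n → ∀ m : ℤ, 1 / (A * n) ≤ |n * α - m| := by
  obtain ⟨p, hp0, hpdeg, hpval⟩ := hdeg
  set f : ℤ[X] := IsLocalization.integerNormalization (nonZeroDivisors ℤ) p with hf
  have hf0 : f ≠ 0 := by
    rw [hf, Ne, IsFractionRing.integerNormalization_eq_zero_iff]; exact hp0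
  have hfval : Polynomial.eval α (f.map (algebraMap ℤ ℝ)) = 0 := by
    have h := IsLocalization.integerNormalization_aeval_eq_zero (nonZeroDivisors ℤ) p
      (x := α) hpval
    rwa [Polynomial.aeval_def, ← Polynomial.eval_map] at h
  have hpnd : p.natDegree = 2 :=
    Polynomial.natDegree_eq_of_degree_eq_some (by exact_mod_cast hpdeg)
  have hfdeg : f.natDegree ≤ 2 := by
    rw [Polynomial.natDegree_le_iff_coeff_eq_zero]
    intro N hN
    have hpc : p.coeff N = 0 :=
      Polynomial.coeff_eq_zero_of_natDegree_lt (by omega)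
    rw [hf, IsLocalization.integerNormalization_coeff]
    exact IsLocalization.coeffIntegerNormalization_of_coeff_zero _ p N hpc
  obtain ⟨A, hA, hineq⟩ := Liouville.exists_pos_real_of_irrational_root hirr hf0 hfval
  refine ⟨A, hA, fun n hn m => ?_⟩
  have hn' : (1:ℝ) ≤ n := by exact_mod_cast hn
  have hn0 : (0:ℝ) < n := by linarith
  have hcast : ((n - 1 : ℕ) : ℝ) + 1 = n := by
    rw [Nat.cast_sub hn]; ring
  have hkey := hineq m (n - 1)
  rw [hcast] at hkey
  have hpow : (n:ℝ) ^ f.natDegree ≤ (n:ℝ) ^ 2 := pow_le_pow_right₀ hn' hfdeg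
  have hkey2 : 1 ≤ (n:ℝ) ^ 2 * (|α - m / n| * A) := by
    refine hkey.trans ?_
    apply mul_le_mul_of_nonneg_right hpow
    positivity
  have habs : |(n:ℝ) * α - m| = n * |α - m / n| := by
    rw [← abs_of_pos hn0, ← abs_mul]
    congr 1
    field_simp
    rw [abs_of_pos hn0]; ring
  rw [div_le_iff₀ (by positivity), habs]
  nlinarith [abs_nonneg (α - (m:ℝ) / n)]

lemma abs_le_abs_sin_pi {t : ℝ} (ht : |t| ≤ 1 / 2) : |t| ≤ |Real.sin (π * t)| := by
  have key : ∀ s : ℝ, 0 ≤ s → s ≤ 1 / 2 → s ≤ Real.sin (π * s) := by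
    intro s h0 h12
    rcases eq_or_lt_of_le h0 with h|h0'
    · simp [← h]
    rcases eq_or_lt_of_le h12 with h|h
    · rw [h, show π * (1/2 : ℝ) = π / 2 by ring, Real.sin_pi_div_two]; norm_num
    · have hlt := Real.mul_lt_sin (x := π * s) (by positivity)
        (by nlinarith [Real.pi_pos])
      have h2 : 2 / π * (π * s) = 2 * s := by
        field_simp
      nlinarith
  have h1 : |t| ≤ Real.sin (π * |t|) := key _ (abs_nonneg t) ht
  refine h1.trans ?_
  rcases abs_choice t with h|h <;> rw [h]
  · exact le_abs_self _
  · rw [mul_neg, Real.sin_neg]; exact neg_le_abs _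

lemma sin_lower {θ A : ℝ} (hA : 0 < A)
    (h : ∀ n : ℕ, 1 ≤ n → ∀ m : ℤ, 1 / (A * n) ≤ |n * θ - m|) :
    ∀ n : ℕ, 1 ≤ n → 1 / (A * n) ≤ |Real.sin (π * n * θ)| := by
  intro n hn
  set x : ℝ := n * θ with hx
  set m : ℤ := round x with hm
  have ht2 : |x - m| ≤ 1 / 2 := abs_sub_round x
  have ht1 : 1 / (A * n) ≤ |x - m| := by
    have := h n hn m
    simpa [hx] using this
  have heq : Real.sin (π * n * θ) = (-1 : ℝ) ^ m * Real.sin (π * (x - m)) := by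
    rw [← Real.sin_add_int_mul_pi]
    congr 1
    push_cast
    ring
  rw [heq, abs_mul]
  have hone : |(-1 : ℝ) ^ m| = 1 := by
    rcases Int.even_or_odd m with he|ho
    · rw [he.neg_one_zpow]; norm_num
    · rw [ho.neg_one_zpow]; norm_num
  rw [hone, one_mul]
  exact ht1.trans (abs_le_abs_sin_pi ht2)

lemma complex_sin_lower (w : ℂ) :
    (Real.exp |w.im| - Real.exp (-|w.im|)) / 2 ≤ ‖Complex.sin w‖ := by
  have hdef : Complex.sin w = (Complex.exp (-w * Complex.I) - Complex.exp (w * Complex.I))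
      * Complex.I / 2 := rfl
  have hnorm : ‖Complex.sin w‖
      = ‖Complex.exp (-w * Complex.I) - Complex.exp (w * Complex.I)‖ / 2 := by
    rw [hdef]
    simp [norm_mul, norm_div]
  have h1 : ‖Complex.exp (-w * Complex.I)‖ = Real.exp w.im := by
    rw [Complex.norm_exp]
    congr 1
    simp
  have h2 : ‖Complex.exp (w * Complex.I)‖ = Real.exp (-w.im) := by
    rw [Complex.norm_exp]
    congr 1
    simp
  have hsub1 : Real.exp w.im - Real.exp (-w.im)
      ≤ ‖Complex.exp (-w * Complex.I) - Complex.exp (w * Complex.I)‖ := by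
    rw [← h1, ← h2]; exact norm_sub_norm_le _ _
  have hsub2 : Real.exp (-w.im) - Real.exp w.im
      ≤ ‖Complex.exp (-w * Complex.I) - Complex.exp (w * Complex.I)‖ := by
    rw [← h1, ← h2, norm_sub_rev]; exact norm_sub_norm_le _ _
  rw [hnorm]
  rcases abs_choice w.im with h|h <;> rw [h]
  · linarith
  · rw [neg_neg]; linarith

lemma complex_cos_upper (w : ℂ) : ‖Complex.cos w‖ ≤ Real.exp |w.im| := by
  have hdef : Complex.cos w = (Complex.exp (w * Complex.I) + Complex.exp (-w * Complex.I)) / 2 :=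
    rfl
  have h1 : ‖Complex.exp (-w * Complex.I)‖ = Real.exp w.im := by
    rw [Complex.norm_exp]; congr 1; simp
  have h2 : ‖Complex.exp (w * Complex.I)‖ = Real.exp (-w.im) := by
    rw [Complex.norm_exp]; congr 1; simp
  have hadd := norm_add_le (Complex.exp (w * Complex.I)) (Complex.exp (-w * Complex.I))
  have e1 : Real.exp (-w.im) ≤ Real.exp |w.im| := Real.exp_le_exp.2 (neg_le_abs w.im)
  have e2 : Real.exp w.im ≤ Real.exp |w.im| := Real.exp_le_exp.2 (le_abs_self w.im)
  rw [hdef, norm_div]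
  simp only [Complex.norm_ofNat]
  rw [h1, h2] at hadd
  linarith


/-- The `j`-th term (`j ≥ 1`) of the trigonometric series for `G_2`:
`cos(πj(2z - τ₀ - τ₁ - τ₂)) / (j sin(πjτ₀) sin(πjτ₁) sin(πjτ₂))`. -/
noncomputable def g2TrigTerm (z τ₀ τ₁ τ₂ : ℂ) (j : ℕ) : ℂ :=
  Complex.cos ((π : ℂ) * j * (2 * z - τ₀ - τ₁ - τ₂)) /
    ((j : ℂ) * Complex.sin ((π : ℂ) * j * τ₀) * Complex.sin ((π : ℂ) * j * τ₁) *
      Complex.sin ((π : ℂ) * j * τ₂))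

/-- Let `Im τ₀ > 0`, `Im τ₂ < 0`, let `τ₁` be a real quadratic
irrational (so `Im τ₁ = 0`), and suppose `Im τ₂ < Im z < Im τ₀`. Then the series
`Σ_{j ≥ 1} cos(πj(2z - τ₀ - τ₁ - τ₂)) / (j sin(πjτ₀) sin(πjτ₁) sin(πjτ₂))` is
absolutely convergent. -/
theorem statement10
    (z τ₀ τ₁ τ₂ : ℂ)
    (h0 : 0 < τ₀.im) (h2 : τ₂.im < 0)
    (h1im : τ₁.im = 0)
    (h1irr : Irrational τ₁.re)
    (h1deg : ∃ p : Polynomial ℚ, p ≠ 0 ∧ p.degree = 2 ∧ Polynomial.aeval τ₁.re p = 0)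
    (hz : τ₂.im < z.im ∧ z.im < τ₀.im) :
    Summable (fun j : ℕ => ‖g2TrigTerm z τ₀ τ₁ τ₂ (j + 1)‖) := by
  obtain ⟨hz2, hz0⟩ := hz
  obtain ⟨A, hA, hDio⟩ := quadLiouville h1irr h1deg
  have hτ1 : τ₁ = ((τ₁.re : ℝ) : ℂ) := by
    apply Complex.ext <;> simp [h1im]
  have hπ := Real.pi_pos
  set b : ℝ := π * τ₀.im with hbdef
  set c : ℝ := π * (-τ₂.im) with hcdef
  set a : ℝ := π * |2 * z.im - τ₀.im - τ₂.im| with hadef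
  have hb : 0 < b := mul_pos hπ h0
  have hc : 0 < c := mul_pos hπ (by linarith)
  have habc : a < b + c := by
    have h := abs_lt.2 (⟨by linarith, by linarith⟩ :
      -(τ₀.im - τ₂.im) < 2 * z.im - τ₀.im - τ₂.im ∧ 2 * z.im - τ₀.im - τ₂.im < τ₀.im - τ₂.im)
    rw [hadef, hbdef, hcdef]
    nlinarith
  set Kb : ℝ := (1 - Real.exp (-(2 * b))) / 2 with hKbdef
  set Kc : ℝ := (1 - Real.exp (-(2 * c))) / 2 with hKcdef
  have hKb : 0 < Kb := by
    have : Real.exp (-(2 * b)) < 1 := Real.exp_lt_one_iff.2 (by linarith)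
    rw [hKbdef]; linarith
  have hKc : 0 < Kc := by
    have : Real.exp (-(2 * c)) < 1 := Real.exp_lt_one_iff.2 (by linarith)
    rw [hKcdef]; linarith
  set r : ℝ := Real.exp (a - b - c) with hrdef
  have hr0 : 0 ≤ r := (Real.exp_pos _).le
  have hr1 : r < 1 := Real.exp_lt_one_iff.2 (by linarith)
  set K : ℝ := A / (Kb * Kc) with hKdef
  have hK : 0 < K := by positivity
  have hsum : Summable (fun j : ℕ => K * r ^ (j + 1)) :=
    Summable.congr ((summable_geometric_of_lt_one hr0 hr1).mul_left (K * r))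
      (fun j => by ring)
  refine Summable.of_nonneg_of_le (fun j => norm_nonneg _) (fun j => ?_) hsum
  -- now the pointwise bound for n = j + 1
  set n : ℕ := j + 1 with hndef
  have hn1 : 1 ≤ n := Nat.le_add_left 1 j
  have hN1 : (1 : ℝ) ≤ (n : ℝ) := by exact_mod_cast hn1
  have hN0 : (0 : ℝ) < (n : ℝ) := by linarith
  -- bound for sin(π n τ₀)
  have him0 : ((π : ℂ) * n * τ₀).im = π * n * τ₀.im := by
    rw [show (π : ℂ) * n = ((π * n : ℝ) : ℂ) by push_cast; ring]
    simp [Complex.im_ofReal_mul]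
  have hs0 : Kb * Real.exp (n * b) ≤ ‖Complex.sin ((π : ℂ) * n * τ₀)‖ := by
    refine le_trans ?_ (complex_sin_lower _)
    have him : |((π : ℂ) * n * τ₀).im| = n * b := by
      rw [him0, abs_of_pos (by positivity), hbdef]; ring
    rw [him]
    have hE : Real.exp (-(n * b)) ≤ Real.exp (-(2 * b)) * Real.exp (n * b) := by
      rw [← Real.exp_add]; exact Real.exp_le_exp.2 (by nlinarith)
    rw [hKbdef]
    nlinarith
  -- bound for sin(π n τ₂)
  have him2 : ((π : ℂ) * n * τ₂).im = π * n * τ₂.im := by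
    rw [show (π : ℂ) * n = ((π * n : ℝ) : ℂ) by push_cast; ring]
    simp [Complex.im_ofReal_mul]
  have hs2 : Kc * Real.exp (n * c) ≤ ‖Complex.sin ((π : ℂ) * n * τ₂)‖ := by
    refine le_trans ?_ (complex_sin_lower _)
    have him : |((π : ℂ) * n * τ₂).im| = n * c := by
      rw [him2, abs_of_neg (by nlinarith), hcdef]; ring
    rw [him]
    have hE : Real.exp (-(n * c)) ≤ Real.exp (-(2 * c)) * Real.exp (n * c) := by
      rw [← Real.exp_add]; exact Real.exp_le_exp.2 (by nlinarith)
    rw [hKcdef]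
    nlinarith
  -- bound for sin(π n τ₁)
  have hs1eq : Complex.sin ((π : ℂ) * n * τ₁) = ((Real.sin (π * n * τ₁.re) : ℝ) : ℂ) := by
    rw [hτ1, show (π : ℂ) * n * ((τ₁.re : ℝ) : ℂ) = ((π * n * τ₁.re : ℝ) : ℂ) by
      push_cast; ring, ← Complex.ofReal_sin, Complex.ofReal_re]
  have hs1 : 1 / (A * n) ≤ ‖Complex.sin ((π : ℂ) * n * τ₁)‖ := by
    rw [hs1eq, Complex.norm_real]
    exact sin_lower hA hDio n hn1
  -- bound for cos
  have himc : |((π : ℂ) * n * (2 * z - τ₀ - τ₁ - τ₂)).im| = n * a := by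
    rw [show (π : ℂ) * n = ((π * n : ℝ) : ℂ) by push_cast; ring]
    have : (2 * z - τ₀ - τ₁ - τ₂).im = 2 * z.im - τ₀.im - τ₂.im := by
      simp [h1im]
    rw [Complex.im_ofReal_mul, this, abs_mul, abs_of_pos (by positivity : (0:ℝ) < π * n),
      hadef]
    ring
  have hcos : ‖Complex.cos ((π : ℂ) * n * (2 * z - τ₀ - τ₁ - τ₂))‖ ≤ Real.exp (n * a) := by
    refine (complex_cos_upper _).trans ?_
    rw [himc]
  -- put it together
  have hstep :
      ‖g2TrigTerm z τ₀ τ₁ τ₂ n‖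
        ≤ Real.exp (n * a) /
          ((n : ℝ) * (Kb * Real.exp (n * b)) * (1 / (A * n)) * (Kc * Real.exp (n * c))) := by
    rw [g2TrigTerm, norm_div]
    have hden : ‖((n : ℂ) * Complex.sin ((π : ℂ) * n * τ₀) * Complex.sin ((π : ℂ) * n * τ₁) *
        Complex.sin ((π : ℂ) * n * τ₂))‖
        = (n : ℝ) * ‖Complex.sin ((π : ℂ) * n * τ₀)‖ * ‖Complex.sin ((π : ℂ) * n * τ₁)‖ *
          ‖Complex.sin ((π : ℂ) * n * τ₂)‖ := by
      simp [norm_mul]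
    rw [hden]
    gcongr <;> first
      | exact hcos
      | exact hs0
      | exact hs1
      | exact hs2
      | positivity
  refine le_trans hstep (le_of_eq ?_)
  rw [hrdef, ← Real.exp_nat_mul, show (n : ℝ) * (a - b - c) = n * a - n * b - n * c by ring,
    Real.exp_sub, Real.exp_sub, hKdef]
  have h1 := (Real.exp_pos ((n : ℝ) * a)).ne'
  have h2 := (Real.exp_pos ((n : ℝ) * b)).ne'
  have h3 := (Real.exp_pos ((n : ℝ) * c)).ne'
  field_simp
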